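/- For every sequence of injective maps x_n : Fin n → ℝ, in the coupled random graphs the probability that there exist a p ∈ [(0.9·log n)/n, (2·log n)/n] and an ordered pair of indices that is uncertain in G_p tends to 0 as n → ∞. (log denotes the natural logarithm.) -/

import Mathlib

/-- The product of uniform-`[0,1]` measures indexed by the unordered pairs of distinct indices
of `Fin n`: the standard coupling of the random graphs `G_p`. -/
noncomputable def coupledMeasure (n : ℕ) :
    MeasureTheory.Measure ({e : Sym2 (Fin n) // ¬ e.IsDiag} → ℝ) :=
  MeasureTheory.Measure.pi fun _ => MeasureTheory.volume.restrict (Set.Icc (0 : ℝ) 1)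

/-- `GpSet ω p` is the set of pairs `e` with `U_e ≤ p`, i.e. the coupled random graph `G_p`. -/
def GpSet {n : ℕ} (ω : {e : Sym2 (Fin n) // ¬ e.IsDiag} → ℝ) (p : ℝ) : Set (Sym2 (Fin n)) :=
  {e | ∃ h : ¬ e.IsDiag, ω ⟨e, h⟩ ≤ p}

/-- An ordered pair `(u, v)` is uncertain in `G` if `{u, v}` is the only edge of `G` containing
`u` and the reflection of `x u` over `x v` is a point `x ℓ` with `ℓ` lying in exactly one
edge of `G`. -/
def Uncertain {n : ℕ} (x : Fin n → ℝ) (G : Set (Sym2 (Fin n))) (u v : Fin n) : Prop :=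
  u ≠ v ∧ s(u, v) ∈ G ∧ (∀ e ∈ G, u ∈ e → e = s(u, v)) ∧
    ∃ ℓ : Fin n, x ℓ = 2 * x v - x u ∧ {e ∈ G | ℓ ∈ e}.ncard = 1

open MeasureTheory Finset
open scoped ENNReal
set_option maxHeartbeats 2000000

namespace Stmt12

noncomputable def nu : Measure ℝ := volume.restrict (Set.Icc (0:ℝ) 1)

instance : IsProbabilityMeasure nu := ⟨by simp [nu]⟩

lemma coupled_eq (n : ℕ) :
    coupledMeasure n = Measure.pi fun _ : {e : Sym2 (Fin n) // ¬ e.IsDiag} => nu := rfl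

lemma nu_Iic (b : ℝ) : nu (Set.Iic b) ≤ ENNReal.ofReal b := by
  rw [nu, Measure.restrict_apply measurableSet_Iic]
  calc volume (Set.Iic b ∩ Set.Icc 0 1) ≤ volume (Set.Icc (0:ℝ) b) := by
        apply measure_mono; rintro y ⟨h1, h2, _⟩; exact ⟨h2, h1⟩
    _ = ENNReal.ofReal b := by simp

lemma nu_Ioi (a : ℝ) : nu (Set.Ioi a) ≤ ENNReal.ofReal (1 - a) := by
  rw [nu, Measure.restrict_apply measurableSet_Ioi]
  calc volume (Set.Ioi a ∩ Set.Icc 0 1) ≤ volume (Set.Ioc a 1) := by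
        apply measure_mono; rintro y ⟨h1, _, h3⟩; exact ⟨h1, h3⟩
    _ = ENNReal.ofReal (1 - a) := by simp

variable {n : ℕ}

def emk (i j : Fin n) (h : i ≠ j) : {e : Sym2 (Fin n) // ¬ e.IsDiag} :=
  ⟨s(i,j), by simp [h]⟩

open Classical in
noncomputable def tset (a b : ℝ) (u v ℓ w : Fin n)
    (e : {e : Sym2 (Fin n) // ¬ e.IsDiag}) : Set ℝ :=
  if u ∈ e.1 ∧ v ∈ e.1 then Set.Iic b
  else if ℓ ∈ e.1 ∧ w ∈ e.1 then Set.Iic b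
  else if u ∈ e.1 then Set.Ioi a
  else if ℓ ∈ e.1 ∧ w ∉ e.1 then Set.Ioi a
  else Set.univ

noncomputable def LL (x : Fin n → ℝ) (u v : Fin n) : Fin n :=
  if h : ∃ ℓ, x ℓ = 2 * x v - x u then h.choose else u

lemma LL_spec {x : Fin n → ℝ} {u v : Fin n} (h : ∃ ℓ, x ℓ = 2 * x v - x u) :
    x (LL x u v) = 2 * x v - x u := by
  rw [LL, dif_pos h]; exact h.choose_spec

def Good (x : Fin n → ℝ) (u v w : Fin n) : Prop :=
  u ≠ v ∧ (∃ ℓ, x ℓ = 2 * x v - x u) ∧ w ≠ LL x u v ∧ w ≠ u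

open Classical in
noncomputable def SSet (x : Fin n → ℝ) (a b : ℝ) (uvw : Fin n × Fin n × Fin n) :
    Set ({e : Sym2 (Fin n) // ¬ e.IsDiag} → ℝ) :=
  if Good x uvw.1 uvw.2.1 uvw.2.2 then
    Set.univ.pi (tset a b uvw.1 uvw.2.1 (LL x uvw.1 uvw.2.1) uvw.2.2) else ∅

lemma good_facts {x : Fin n → ℝ} (hx : Function.Injective x) {u v w : Fin n}
    (hg : Good x u v w) :
    u ≠ v ∧ x (LL x u v) = 2 * x v - x u ∧ LL x u v ≠ u ∧ LL x u v ≠ v ∧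
      w ≠ LL x u v ∧ w ≠ u := by
  obtain ⟨huv, hex, hwl, hwu⟩ := hg
  have hlx := LL_spec hex
  refine ⟨huv, hlx, ?_, ?_, hwl, hwu⟩
  · intro h
    rw [h] at hlx
    exact huv (hx (by linarith))
  · intro h
    rw [h] at hlx
    exact huv (hx (by linarith))



lemma event_subset (x : Fin n → ℝ) (hx : Function.Injective x) (a b : ℝ) :
    {ω : {e : Sym2 (Fin n) // ¬ e.IsDiag} → ℝ |
        ∃ p ∈ Set.Icc a b, ∃ u v, Uncertain x (GpSet ω p) u v} ⊆
      ⋃ uvw : Fin n × Fin n × Fin n, SSet x a b uvw := by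
  rintro ω ⟨p, ⟨hap, hpb⟩, u, v, huv, hmem, honly, ℓ', hℓ', hcard⟩
  have hex : ∃ ℓ, x ℓ = 2 * x v - x u := ⟨ℓ', hℓ'⟩
  set ℓ := LL x u v with hLdef
  have hℓx : x ℓ = 2 * x v - x u := LL_spec hex
  have hℓℓ' : ℓ = ℓ' := hx (by rw [hℓx, hℓ'])
  have hℓu : ℓ ≠ u := by
    intro h; rw [h] at hℓx; exact huv (hx (by linarith))
  have hℓv : ℓ ≠ v := by
    intro h; rw [h] at hℓx; exact huv (hx (by linarith))
  rw [← hℓℓ'] at hcard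
  obtain ⟨e0, he0⟩ := Set.ncard_eq_one.mp hcard
  have he0mem : e0 ∈ GpSet ω p ∧ ℓ ∈ e0 := by
    have : e0 ∈ {e ∈ GpSet ω p | ℓ ∈ e} := by rw [he0]; exact rfl
    exact this
  obtain ⟨t0, ht0⟩ : ∃ t, e0 = s(ℓ, t) := he0mem.2
  obtain ⟨hd0, hω0⟩ := he0mem.1
  have ht0ℓ : t0 ≠ ℓ := by
    rintro rfl; rw [ht0] at hd0; simp at hd0
  have ht0u : t0 ≠ u := by
    intro h
    have h1 : e0 = s(u, v) := honly e0 ⟨hd0, hω0⟩ (by rw [ht0, h]; simp)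
    rw [ht0, h] at h1
    rcases Sym2.eq_iff.mp h1 with ⟨h1, _⟩ | ⟨h1, _⟩
    · exact hℓu h1
    · exact hℓv h1
  refine Set.mem_iUnion.mpr ⟨(u, v, t0), ?_⟩
  rw [SSet, if_pos (show Good x u v t0 from ⟨huv, hex, ht0ℓ, ht0u⟩)]
  intro e _
  show ω e ∈ tset a b u v ℓ t0 e
  rw [tset]
  by_cases h1 : u ∈ e.1 ∧ v ∈ e.1
  · rw [if_pos h1]
    have he : e.1 = s(u,v) := (Sym2.mem_and_mem_iff huv).mp h1
    obtain ⟨hd, hω⟩ := hmem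
    have heq : e = ⟨s(u,v), hd⟩ := Subtype.ext he
    rw [heq]
    exact le_trans hω hpb
  · rw [if_neg h1]
    by_cases h2 : ℓ ∈ e.1 ∧ t0 ∈ e.1
    · rw [if_pos h2]
      have he : e.1 = s(ℓ,t0) := (Sym2.mem_and_mem_iff (Ne.symm ht0ℓ)).mp h2
      have heq : e = ⟨e0, hd0⟩ := Subtype.ext (he.trans ht0.symm)
      rw [heq]
      exact le_trans hω0 hpb
    · rw [if_neg h2]
      by_cases h3 : u ∈ e.1
      · rw [if_pos h3]
        by_contra hle
        have hle' : ω e ≤ a := by simpa using hle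
        have hG : e.1 ∈ GpSet ω p := ⟨e.2, le_trans hle' hap⟩
        have hev : e.1 = s(u, v) := honly e.1 hG h3
        exact h1 ⟨h3, by rw [hev]; simp⟩
      · rw [if_neg h3]
        by_cases h4 : ℓ ∈ e.1 ∧ t0 ∉ e.1
        · rw [if_pos h4]
          by_contra hle
          have hle' : ω e ≤ a := by simpa using hle
          have hG : e.1 ∈ GpSet ω p := ⟨e.2, le_trans hle' hap⟩
          have hmem2 : e.1 ∈ {e ∈ GpSet ω p | ℓ ∈ e} := ⟨hG, h4.1⟩
          rw [he0] at hmem2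
          have : e.1 = s(ℓ, t0) := by
            rw [Set.mem_singleton_iff.mp hmem2, ht0]
          exact h4.2 (by rw [this]; simp)
        · rw [if_neg h4]; trivial



lemma prob_pi_le (t : {e : Sym2 (Fin n) // ¬ e.IsDiag} → Set ℝ) :
    coupledMeasure n (Set.univ.pi t) = ∏ e, nu (t e) := by
  rw [coupled_eq]; exact Measure.pi_pi _ _

lemma prod_le_prod_subset (f : {e : Sym2 (Fin n) // ¬ e.IsDiag} → ℝ≥0∞)
    (s : Finset {e : Sym2 (Fin n) // ¬ e.IsDiag}) (hf : ∀ e, f e ≤ 1) :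
    ∏ e, f e ≤ ∏ e ∈ s, f e := by
  rw [← Finset.prod_sdiff (subset_univ s)]
  calc (∏ e ∈ univ \ s, f e) * ∏ e ∈ s, f e ≤ 1 * ∏ e ∈ s, f e :=
        mul_le_mul_left (Finset.prod_le_one' fun e _ => hf e) _
    _ = ∏ e ∈ s, f e := one_mul _

lemma measure_SSet_le (x : Fin n → ℝ) (hx : Function.Injective x) (a b : ℝ)
    (uvw : Fin n × Fin n × Fin n) :
    coupledMeasure n (SSet x a b uvw) ≤
      ENNReal.ofReal b ^ 2 * ENNReal.ofReal (1 - a) ^ (2 * (n - 3)) := by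
  obtain ⟨u, v, w⟩ := uvw
  rw [SSet]
  dsimp only
  split_ifs with hg
  swap
  · simp
  obtain ⟨huv, hℓx, hℓu, hℓv, hwℓ, hwu⟩ := good_facts hx hg
  set ℓ := LL x u v with hLdef
  rw [prob_pi_le]
  set f : {e : Sym2 (Fin n) // ¬ e.IsDiag} → ℝ≥0∞ := fun e => nu (tset a b u v ℓ w e)
    with hf
  -- the distinguished edges
  set e1 : {e : Sym2 (Fin n) // ¬ e.IsDiag} := emk u v huv with he1
  set e2 : {e : Sym2 (Fin n) // ¬ e.IsDiag} := emk ℓ w (Ne.symm hwℓ) with he2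
  set g1 : Fin n → {e : Sym2 (Fin n) // ¬ e.IsDiag} :=
    fun t => if h : u = t then e1 else emk u t h with hg1
  set g2 : Fin n → {e : Sym2 (Fin n) // ¬ e.IsDiag} :=
    fun t => if h : ℓ = t then e1 else emk ℓ t h with hg2
  set T1 : Finset (Fin n) := univ \ {u, v, ℓ} with hT1
  set T2 : Finset (Fin n) := univ \ {ℓ, u, w} with hT2
  set E1 := T1.image g1 with hE1
  set E2 := T2.image g2 with hE2
  have hT1mem : ∀ t ∈ T1, t ≠ u ∧ t ≠ v ∧ t ≠ ℓ := by
    intro t ht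
    simp only [hT1, mem_sdiff, mem_insert, mem_singleton, not_or] at ht
    exact ⟨ht.2.1, ht.2.2.1, ht.2.2.2⟩
  have hT2mem : ∀ t ∈ T2, t ≠ ℓ ∧ t ≠ u ∧ t ≠ w := by
    intro t ht
    simp only [hT2, mem_sdiff, mem_insert, mem_singleton, not_or] at ht
    exact ⟨ht.2.1, ht.2.2.1, ht.2.2.2⟩
  have hg1val : ∀ t ∈ T1, (g1 t).1 = s(u, t) := by
    intro t ht
    rw [hg1]
    simp only
    rw [dif_neg (Ne.symm (hT1mem t ht).1)]
    rfl
  have hg2val : ∀ t ∈ T2, (g2 t).1 = s(ℓ, t) := by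
    intro t ht
    rw [hg2]
    simp only
    rw [dif_neg (Ne.symm (hT2mem t ht).1)]
    rfl
  -- membership facts
  have he1E1 : e1 ∉ E1 := by
    rw [hE1]
    simp only [mem_image, not_exists]
    rintro t ⟨ht, heq⟩
    have : (g1 t).1 = s(u, t) := hg1val t ht
    rw [heq] at this
    rcases Sym2.eq_iff.mp this with ⟨_, h2⟩ | ⟨h1, _⟩
    · exact (hT1mem t ht).2.1 h2.symm
    · exact (hT1mem t ht).1 h1.symm
  have he1E2 : e1 ∉ E2 := by
    rw [hE2]
    simp only [mem_image, not_exists]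
    rintro t ⟨ht, heq⟩
    have : (g2 t).1 = s(ℓ, t) := hg2val t ht
    rw [heq] at this
    -- this : s(u,v) = s(ℓ,t)
    rcases Sym2.eq_iff.mp this with ⟨h1, _⟩ | ⟨h1, _⟩
    · exact hℓu h1.symm
    · exact (hT2mem t ht).2.1 h1.symm
  have he2E1 : e2 ∉ E1 := by
    rw [hE1]
    simp only [mem_image, not_exists]
    rintro t ⟨ht, heq⟩
    have : (g1 t).1 = s(u, t) := hg1val t ht
    rw [heq] at this
    -- this : s(ℓ,w) = s(u,t)
    rcases Sym2.eq_iff.mp this with ⟨h1, _⟩ | ⟨_, h2⟩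
    · exact hℓu h1
    · exact hwu h2
  have he2E2 : e2 ∉ E2 := by
    rw [hE2]
    simp only [mem_image, not_exists]
    rintro t ⟨ht, heq⟩
    have : (g2 t).1 = s(ℓ, t) := hg2val t ht
    rw [heq] at this
    -- this : s(ℓ,w) = s(ℓ,t)
    rcases Sym2.eq_iff.mp this with ⟨_, h2⟩ | ⟨h1, h2⟩
    · exact (hT2mem t ht).2.2 h2.symm
    · exact hwℓ h2
  have he1e2 : e1 ≠ e2 := by
    intro h
    have : s(u, v) = s(ℓ, w) := congrArg Subtype.val h
    rcases Sym2.eq_iff.mp this with ⟨h1, _⟩ | ⟨h1, _⟩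
    · exact hℓu h1.symm
    · exact hwu h1.symm
  have hdisj : Disjoint E1 E2 := by
    rw [Finset.disjoint_left]
    intro e heE1 heE2
    rw [hE1] at heE1
    rw [hE2] at heE2
    obtain ⟨t, ht, heq⟩ := mem_image.mp heE1
    obtain ⟨t', ht', heq'⟩ := mem_image.mp heE2
    have h1 : e.1 = s(u, t) := by rw [← heq]; exact hg1val t ht
    have h2 : e.1 = s(ℓ, t') := by rw [← heq']; exact hg2val t' ht'
    rcases Sym2.eq_iff.mp (h1.symm.trans h2) with ⟨ha1, _⟩ | ⟨ha1, _⟩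
    · exact hℓu ha1.symm
    · exact (hT2mem t' ht').2.1 ha1.symm
  -- cardinalities
  have hT1card : T1.card = n - 3 := by
    rw [hT1, card_sdiff_of_subset (subset_univ _), card_univ, Fintype.card_fin]
    congr 1
    rw [card_insert_of_notMem (by simp [huv, Ne.symm hℓu]),
      card_insert_of_notMem (by simp [Ne.symm hℓv]), card_singleton]
  have hT2card : T2.card = n - 3 := by
    rw [hT2, card_sdiff_of_subset (subset_univ _), card_univ, Fintype.card_fin]
    congr 1
    rw [card_insert_of_notMem (by simp [hℓu, Ne.symm hwℓ]),
      card_insert_of_notMem (by simp [Ne.symm hwu]), card_singleton]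
  -- value facts
  have hue1 : u ∈ e1.1 := by rw [he1]; exact Sym2.mem_mk_left u v
  have hve1 : v ∈ e1.1 := by rw [he1]; exact Sym2.mem_mk_right u v
  have hfe1 : f e1 ≤ ENNReal.ofReal b := by
    rw [hf]
    simp only
    rw [tset, if_pos ⟨hue1, hve1⟩]
    exact nu_Iic b
  have hfe2 : f e2 ≤ ENNReal.ofReal b := by
    rw [hf]
    simp only
    have hval : e2.1 = s(ℓ, w) := rfl
    have c1 : ¬(u = ℓ ∨ u = w) := by
      rintro (h | h)
      · exact hℓu h.symm
      · exact hwu h.symm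
    rw [tset, hval]
    rw [if_neg (fun hc => c1 (Sym2.mem_iff.mp hc.1)),
      if_pos ⟨Sym2.mem_mk_left ℓ w, Sym2.mem_mk_right ℓ w⟩]
    exact nu_Iic b
  have hfE1 : ∀ e ∈ E1, f e ≤ ENNReal.ofReal (1 - a) := by
    intro e he
    obtain ⟨t, ht, heq⟩ := mem_image.mp he
    have hval : e.1 = s(u, t) := by rw [← heq]; exact hg1val t ht
    have c1 : ¬(v = u ∨ v = t) := by
      rintro (h | h)
      · exact huv h.symm
      · exact (hT1mem t ht).2.1 h.symm
    have c2 : ¬(ℓ = u ∨ ℓ = t) := by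
      rintro (h | h)
      · exact hℓu h
      · exact (hT1mem t ht).2.2 h.symm
    rw [hf]
    simp only
    rw [tset, hval]
    rw [if_neg (fun hc => c1 (Sym2.mem_iff.mp hc.2)),
      if_neg (fun hc => c2 (Sym2.mem_iff.mp hc.1)),
      if_pos (Sym2.mem_mk_left u t)]
    exact nu_Ioi a
  have hfE2 : ∀ e ∈ E2, f e ≤ ENNReal.ofReal (1 - a) := by
    intro e he
    obtain ⟨t, ht, heq⟩ := mem_image.mp he
    have hval : e.1 = s(ℓ, t) := by rw [← heq]; exact hg2val t ht
    have c1 : ¬(u = ℓ ∨ u = t) := by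
      rintro (h | h)
      · exact hℓu h.symm
      · exact (hT2mem t ht).2.1 h.symm
    have c2 : ¬(w = ℓ ∨ w = t) := by
      rintro (h | h)
      · exact hwℓ h
      · exact (hT2mem t ht).2.2 h.symm
    rw [hf]
    simp only
    rw [tset, hval]
    rw [if_neg (fun hc => c1 (Sym2.mem_iff.mp hc.1)),
      if_neg (fun hc => c2 (Sym2.mem_iff.mp hc.2)),
      if_neg (fun hc => c1 (Sym2.mem_iff.mp hc)),
      if_pos ⟨Sym2.mem_mk_left ℓ t, fun hc => c2 (Sym2.mem_iff.mp hc)⟩]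
    exact nu_Ioi a
  -- cardinalities of edge sets
  have hE1card : E1.card = n - 3 := by
    rw [hE1, card_image_of_injOn, hT1card]
    intro t ht t' ht' heq
    have h1 : (g1 t).1 = s(u, t) := hg1val t ht
    have h2 : (g1 t').1 = s(u, t') := hg1val t' ht'
    rw [heq] at h1
    rcases Sym2.eq_iff.mp (h1.symm.trans h2) with ⟨_, hb⟩ | ⟨ha, _⟩
    · exact hb
    · exact absurd ha.symm (hT1mem t' ht').1
  have hE2card : E2.card = n - 3 := by
    rw [hE2, card_image_of_injOn, hT2card]
    intro t ht t' ht' heq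
    have h1 : (g2 t).1 = s(ℓ, t) := hg2val t ht
    have h2 : (g2 t').1 = s(ℓ, t') := hg2val t' ht'
    rw [heq] at h1
    rcases Sym2.eq_iff.mp (h1.symm.trans h2) with ⟨_, hb⟩ | ⟨ha, _⟩
    · exact hb
    · exact absurd ha.symm (hT2mem t' ht').1
  -- product chain
  have hfle1 : ∀ e, f e ≤ 1 := fun e => prob_le_one
  have he1notin : e1 ∉ insert e2 (E1 ∪ E2) := by
    simp only [mem_insert, mem_union, not_or]
    exact ⟨he1e2, he1E1, he1E2⟩
  have he2notin : e2 ∉ E1 ∪ E2 := by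
    simp only [mem_union, not_or]
    exact ⟨he2E1, he2E2⟩
  calc ∏ e, f e ≤ ∏ e ∈ insert e1 (insert e2 (E1 ∪ E2)), f e :=
        prod_le_prod_subset f _ hfle1
    _ = f e1 * (f e2 * ((∏ e ∈ E1, f e) * ∏ e ∈ E2, f e)) := by
        rw [prod_insert he1notin, prod_insert he2notin, prod_union hdisj]
    _ ≤ ENNReal.ofReal b * (ENNReal.ofReal b *
          (ENNReal.ofReal (1 - a) ^ (n - 3) * ENNReal.ofReal (1 - a) ^ (n - 3))) := by
        refine mul_le_mul' hfe1 (mul_le_mul' hfe2 (mul_le_mul' ?_ ?_))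
        · calc ∏ e ∈ E1, f e ≤ ∏ _e ∈ E1, ENNReal.ofReal (1 - a) :=
                Finset.prod_le_prod' hfE1
            _ = ENNReal.ofReal (1 - a) ^ (n - 3) := by rw [prod_const, hE1card]
        · calc ∏ e ∈ E2, f e ≤ ∏ _e ∈ E2, ENNReal.ofReal (1 - a) :=
                Finset.prod_le_prod' hfE2
            _ = ENNReal.ofReal (1 - a) ^ (n - 3) := by rw [prod_const, hE2card]
    _ = ENNReal.ofReal b ^ 2 * ENNReal.ofReal (1 - a) ^ (2 * (n - 3)) := by
        rw [two_mul, pow_add, sq]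
        ring

lemma event_le (x : Fin n → ℝ) (hx : Function.Injective x) (a b : ℝ) :
    coupledMeasure n {ω | ∃ p ∈ Set.Icc a b, ∃ u v, Uncertain x (GpSet ω p) u v} ≤
      (n : ℝ≥0∞) ^ 3 *
        (ENNReal.ofReal b ^ 2 * ENNReal.ofReal (1 - a) ^ (2 * (n - 3))) := by
  calc coupledMeasure n {ω | ∃ p ∈ Set.Icc a b, ∃ u v, Uncertain x (GpSet ω p) u v}
      ≤ coupledMeasure n (⋃ uvw : Fin n × Fin n × Fin n, SSet x a b uvw) :=
        measure_mono (event_subset x hx a b)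
    _ ≤ ∑' uvw : Fin n × Fin n × Fin n, coupledMeasure n (SSet x a b uvw) :=
        measure_iUnion_le _
    _ = ∑ uvw : Fin n × Fin n × Fin n, coupledMeasure n (SSet x a b uvw) :=
        tsum_fintype _
    _ ≤ ∑ _uvw : Fin n × Fin n × Fin n,
          (ENNReal.ofReal b ^ 2 * ENNReal.ofReal (1 - a) ^ (2 * (n - 3))) :=
        Finset.sum_le_sum fun i _ => measure_SSet_le x hx a b i
    _ = (n : ℝ≥0∞) ^ 3 *
          (ENNReal.ofReal b ^ 2 * ENNReal.ofReal (1 - a) ^ (2 * (n - 3))) := by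
        rw [Finset.sum_const, Finset.card_univ, nsmul_eq_mul]
        congr 1
        simp only [Fintype.card_prod, Fintype.card_fin]
        push_cast
        ring

lemma real_bound (m : ℕ) (hm : 3 ≤ m) :
    (m : ℝ) ^ 3 * ((2 * Real.log m / m) ^ 2 *
        Real.exp (-(0.9 * Real.log m / m)) ^ (2 * (m - 3))) ≤
      25 * Real.exp 5.4 *
        ((0.8 * Real.log m) ^ 2 * Real.exp (-(0.8 * Real.log m))) := by
  have hm1 : (1 : ℝ) ≤ (m : ℝ) := by exact_mod_cast Nat.one_le_of_lt hm
  have hmpos : (0 : ℝ) < m := by linarith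
  set t := Real.log m with htdef
  have ht0 : 0 ≤ t := Real.log_nonneg hm1
  have htm : t ≤ (m : ℝ) := by
    have := Real.log_le_sub_one_of_pos hmpos
    linarith
  have hexp_t : Real.exp t = m := Real.exp_log hmpos
  have hM : ((2 * (m - 3) : ℕ) : ℝ) = 2 * (m : ℝ) - 6 := by
    push_cast [Nat.cast_sub hm]
    ring
  have hE : Real.exp (-(0.9 * t / m)) ^ (2 * (m - 3)) =
      Real.exp (-(1.8 * t) + 5.4 * t / m) := by
    rw [← Real.exp_nat_mul]
    congr 1
    rw [hM]
    field_simp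
    ring
  have f2 : (m : ℝ) ^ 3 * (2 * t / m) ^ 2 = 4 * t ^ 2 * m := by
    field_simp
    ring
  have f3 : (m : ℝ) * Real.exp (-(1.8 * t)) = Real.exp (-(0.8 * t)) := by
    rw [← hexp_t, ← Real.exp_add]
    congr 1
    ring
  have f1 : Real.exp (5.4 * t / m) ≤ Real.exp 5.4 := by
    apply Real.exp_le_exp.mpr
    rw [div_le_iff₀ hmpos]
    nlinarith
  rw [hE, Real.exp_add]
  calc (m : ℝ) ^ 3 * ((2 * t / m) ^ 2 *
          (Real.exp (-(1.8 * t)) * Real.exp (5.4 * t / m)))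
      = ((m : ℝ) ^ 3 * (2 * t / m) ^ 2) * ((m:ℝ) * Real.exp (-(1.8 * t))) *
          Real.exp (5.4 * t / m) / m := by
        field_simp
    _ = (4 * t ^ 2 * m) * Real.exp (-(0.8 * t)) * Real.exp (5.4 * t / m) / m := by
        rw [f2, f3]
    _ = 4 * t ^ 2 * Real.exp (-(0.8 * t)) * Real.exp (5.4 * t / m) := by
        field_simp
    _ ≤ 4 * t ^ 2 * Real.exp (-(0.8 * t)) * Real.exp 5.4 :=
        mul_le_mul_of_nonneg_left f1 (by positivity)
    _ ≤ 25 * Real.exp 5.4 * ((0.8 * t) ^ 2 * Real.exp (-(0.8 * t))) := by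
        nlinarith [mul_nonneg (mul_nonneg (sq_nonneg t)
          (Real.exp_pos (-(0.8 * t))).le) (Real.exp_pos (5.4 : ℝ)).le]

lemma enn_bound (m : ℕ) (hm : 3 ≤ m) :
    (m : ℝ≥0∞) ^ 3 * (ENNReal.ofReal (2 * Real.log m / m) ^ 2 *
        ENNReal.ofReal (1 - 0.9 * Real.log m / m) ^ (2 * (m - 3))) ≤
      ENNReal.ofReal (25 * Real.exp 5.4 *
        ((0.8 * Real.log m) ^ 2 * Real.exp (-(0.8 * Real.log m)))) := by
  have hm1 : (1 : ℝ) ≤ (m : ℝ) := by exact_mod_cast Nat.one_le_of_lt hm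
  have hmpos : (0 : ℝ) < m := by linarith
  have ht0 : 0 ≤ Real.log m := Real.log_nonneg hm1
  have hb0 : (0:ℝ) ≤ 2 * Real.log m / m := by positivity
  have step1 : ENNReal.ofReal (1 - 0.9 * Real.log m / m) ≤
      ENNReal.ofReal (Real.exp (-(0.9 * Real.log m / m))) := by
    apply ENNReal.ofReal_le_ofReal
    have := Real.add_one_le_exp (-(0.9 * Real.log m / m))
    linarith
  calc (m : ℝ≥0∞) ^ 3 * (ENNReal.ofReal (2 * Real.log m / m) ^ 2 *
          ENNReal.ofReal (1 - 0.9 * Real.log m / m) ^ (2 * (m - 3)))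
      ≤ (m : ℝ≥0∞) ^ 3 * (ENNReal.ofReal (2 * Real.log m / m) ^ 2 *
          ENNReal.ofReal (Real.exp (-(0.9 * Real.log m / m))) ^ (2 * (m - 3))) := by
        exact mul_le_mul' le_rfl (mul_le_mul' le_rfl (pow_le_pow_left' step1 _))
    _ = ENNReal.ofReal ((m : ℝ) ^ 3 * ((2 * Real.log m / m) ^ 2 *
          Real.exp (-(0.9 * Real.log m / m)) ^ (2 * (m - 3)))) := by
        rw [ENNReal.ofReal_mul (by positivity), ENNReal.ofReal_mul (by positivity),
          ENNReal.ofReal_pow hb0, ENNReal.ofReal_pow (Real.exp_nonneg _),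
          ENNReal.ofReal_pow (by positivity : (0:ℝ) ≤ (m:ℝ)), ENNReal.ofReal_natCast]
    _ ≤ ENNReal.ofReal (25 * Real.exp 5.4 *
          ((0.8 * Real.log m) ^ 2 * Real.exp (-(0.8 * Real.log m)))) :=
        ENNReal.ofReal_le_ofReal (real_bound m hm)

end Stmt12

/-- Whp there is no `p ∈ [(0.9 log n)/n, (2 log n)/n]` for which `G_p` contains an uncertain
ordered pair of indices. -/
theorem statement12
    (x : (n : ℕ) → Fin n → ℝ) (hx : ∀ n, Function.Injective (x n)) :
    Filter.Tendsto
      (fun (n : ℕ) => coupledMeasure n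
        {ω | ∃ p ∈ Set.Icc (0.9 * Real.log n / n) (2 * Real.log n / n),
          ∃ u v : Fin n, Uncertain (x n) (GpSet ω p) u v})
      Filter.atTop (nhds 0) := by
  have hupper : Filter.Tendsto
      (fun m : ℕ => ENNReal.ofReal (25 * Real.exp 5.4 *
        ((0.8 * Real.log m) ^ 2 * Real.exp (-(0.8 * Real.log m)))))
      Filter.atTop (nhds 0) := by
    have h1 : Filter.Tendsto (fun m : ℕ => 0.8 * Real.log m) Filter.atTop Filter.atTop :=
      Filter.Tendsto.const_mul_atTop (by norm_num)
        (Real.tendsto_log_atTop.comp tendsto_natCast_atTop_atTop)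
    have h2 : Filter.Tendsto (fun y : ℝ => y ^ 2 * Real.exp (-y))
        Filter.atTop (nhds 0) := Real.tendsto_pow_mul_exp_neg_atTop_nhds_zero 2
    have h3 := (h2.comp h1).const_mul (25 * Real.exp 5.4)
    rw [mul_zero] at h3
    have h4 := ENNReal.tendsto_ofReal h3
    rw [ENNReal.ofReal_zero] at h4
    exact h4
  apply tendsto_of_tendsto_of_tendsto_of_le_of_le' tendsto_const_nhds hupper
  · exact Filter.Eventually.of_forall fun m => zero_le
  · filter_upwards [Filter.eventually_ge_atTop 3] with m hm3
    exact le_trans (Stmt12.event_le (x m) (hx m) _ _) (Stmt12.enn_bound m hm3)
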